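/- Suppose the autoencoders (E_i, D_i) and (E_j, D_j) are both optimal. Then the distribution of the translated variable from domain i to domain j equals the true marginal of domain j; that is, the pushforward of P_{X_i} ⊗ P_{N_j} under the map (x, n) ↦ D_j(π^Z(E_i(x)), n) equals P_{X_j}. -/

import Mathlib

open MeasureTheory

/-- If the autoencoders of domains `i` and `j` are both optimal (zero reconstruction loss and
encoded distribution equal to `P_Z ⊗ P_N`), then the translated distribution
`(x, n) ↦ D_j(π^Z(E_i x), n) # (P_{X_i} ⊗ P_{N_j})` equals the true marginal `P_{X_j}`. -/
theorem translation_matches_marginal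
    {Xi Xj Z Ni Nj : Type*}
    [MeasurableSpace Xi] [StandardBorelSpace Xi]
    [MeasurableSpace Xj] [StandardBorelSpace Xj]
    [MeasurableSpace Z] [StandardBorelSpace Z]
    [MeasurableSpace Ni] [StandardBorelSpace Ni]
    [MeasurableSpace Nj] [StandardBorelSpace Nj]
    (PXi : Measure Xi) [IsProbabilityMeasure PXi]
    (PXj : Measure Xj) [IsProbabilityMeasure PXj]
    (PZ : Measure Z) [IsProbabilityMeasure PZ]
    (PNi : Measure Ni) [IsProbabilityMeasure PNi]
    (PNj : Measure Nj) [IsProbabilityMeasure PNj]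
    (Ei : Xi → Z × Ni) (Di : Z × Ni → Xi)
    (Ej : Xj → Z × Nj) (Dj : Z × Nj → Xj)
    (hEi : Measurable Ei) (hDi : Measurable Di)
    (hEj : Measurable Ej) (hDj : Measurable Dj)
    (hreci : ∀ᵐ x ∂PXi, Di (Ei x) = x)
    (hlati : PXi.map Ei = PZ.prod PNi)
    (hrecj : ∀ᵐ x ∂PXj, Dj (Ej x) = x)
    (hlatj : PXj.map Ej = PZ.prod PNj) :
    Measure.map (fun p : Xi × Nj => Dj ((Ei p.1).1, p.2)) (PXi.prod PNj) = PXj := by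
  have hf : Measurable fun x : Xi => (Ei x).1 := measurable_fst.comp hEi
  have h1 : PXi.map (fun x => (Ei x).1) = PZ := by
    have : PXi.map (fun x => (Ei x).1) = (PXi.map Ei).map Prod.fst := by
      rw [Measure.map_map measurable_fst hEi]; rfl
    rw [this, hlati, Measure.map_fst_prod, measure_univ, one_smul]
  have hstep : Measure.map (Prod.map (fun x : Xi => (Ei x).1) (id : Nj → Nj))
      (PXi.prod PNj) = PZ.prod PNj := by
    rw [← Measure.map_prod_map _ _ hf measurable_id, h1, Measure.map_id]
  have hcomp : (fun p : Xi × Nj => Dj ((Ei p.1).1, p.2))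
      = Dj ∘ Prod.map (fun x : Xi => (Ei x).1) (id : Nj → Nj) := rfl
  rw [hcomp, ← Measure.map_map hDj (hf.prodMap measurable_id), hstep, ← hlatj,
    Measure.map_map hDj hEj]
  calc PXj.map (Dj ∘ Ej) = PXj.map id := Measure.map_congr hrecj
    _ = PXj := Measure.map_id
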